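/- For any undirected graph G = (V,E) and positive integer k, the greedy algorithm that repeatedly deletes a vertex of minimum degree among those of degree at least k (until all remaining vertices have degree < k) outputs a contagious set I with |I| ≤ Σ_{v∈V} min(1, k/(d(v)+1)), where degrees are taken in the original graph G. -/

import Mathlib

/-- A set `T` is closed under the threshold-`k` activation rule: every vertex with at
least `k` neighbors in `T` belongs to `T`. -/
def ClosedUnder {V : Type*} (G : SimpleGraph V) (k : ℕ) (T : Set V) : Prop :=
  ∀ v : V, k ≤ {u : V | G.Adj v u ∧ u ∈ T}.ncard → v ∈ T

/-- `A` is contagious with threshold `k`: the activation process starting from `A`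
(equivalently, the least `ClosedUnder`-closed superset of `A`) activates every vertex. -/
def Contagious {V : Type*} (G : SimpleGraph V) (k : ℕ) (A : Set V) : Prop :=
  ∀ T : Set V, A ⊆ T → ClosedUnder G k T → ∀ v : V, v ∈ T

lemma aux_take_succ_mem {V : Type*} (l : List V) {j : ℕ} (hj : j < l.length) (u : V) :
    u ∈ l.take (j+1) ↔ u ∈ l.take j ∨ u = l[j] := by
  rw [List.take_succ, List.getElem?_eq_getElem hj]
  simp only [Option.toList_some, List.mem_append, List.mem_singleton]

lemma aux_not_mem_take {V : Type*} {l : List V} (hnd : l.Nodup) {j : ℕ} (hj : j < l.length) :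
    l[j] ∉ l.take j := by
  intro h
  rw [List.mem_take_iff_getElem] at h
  obtain ⟨i, hi, he⟩ := h
  have h2 : i < l.length := lt_of_lt_of_le (lt_of_lt_of_le hi (min_le_left _ _)) hj.le
  have h3 : i = j := (hnd.getElem_inj_iff (hi := h2) (hj := hj)).1 he
  have h4 : i < j := lt_of_lt_of_le hi (min_le_left _ _)
  omega

lemma aux_arith (k d D : ℕ) (hk : 0 < k) (hkd : k ≤ d) (hdD : k ≤ D → d ≤ D) (hD : 1 ≤ D) :
    min 1 ((k:ℝ)/(((D-1 : ℕ):ℝ)+1)) - min 1 ((k:ℝ)/((D:ℝ)+1)) ≤ (k:ℝ)/(d*(d+1)) := by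
  have hDc : ((D-1 : ℕ):ℝ) + 1 = (D:ℝ) := by
    have : D - 1 + 1 = D := by omega
    push_cast [this]
    push_cast
    rw [← Nat.cast_add_one, this]
  rw [hDc]
  have hd1 : (1:ℕ) ≤ d := le_trans hk hkd
  have hdpos : (0:ℝ) < (d:ℝ) := by exact_mod_cast hd1
  have hdpos1 : (0:ℝ) < (d:ℝ)+1 := by linarith
  have hDpos : (0:ℝ) < (D:ℝ) := by exact_mod_cast hD
  have hDpos1 : (0:ℝ) < (D:ℝ)+1 := by linarith
  rcases lt_or_ge D k with h | h
  · have h1 : (1:ℝ) ≤ (k:ℝ)/(D:ℝ) := by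
      rw [le_div_iff₀ hDpos]; have : (D:ℝ) ≤ k := by exact_mod_cast h.le
      linarith
    have h2 : (1:ℝ) ≤ (k:ℝ)/((D:ℝ)+1) := by
      rw [le_div_iff₀ hDpos1]
      have : (D:ℝ)+1 ≤ k := by exact_mod_cast h
      linarith
    rw [min_eq_left h1, min_eq_left h2, sub_self]
    positivity
  · have hdD' : (d:ℝ) ≤ (D:ℝ) := by exact_mod_cast hdD h
    have h2 : (k:ℝ)/((D:ℝ)+1) ≤ 1 := by
      rw [div_le_one hDpos1]
      have : (k:ℝ) ≤ D := by exact_mod_cast h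
      linarith
    rw [min_eq_right h2]
    have h3 : min 1 ((k:ℝ)/(D:ℝ)) ≤ (k:ℝ)/(D:ℝ) := min_le_right _ _
    have h4 : (k:ℝ)/(D:ℝ) - (k:ℝ)/((D:ℝ)+1) = (k:ℝ)/((D:ℝ)*((D:ℝ)+1)) := by
      field_simp; ring
    have h5 : (k:ℝ)/((D:ℝ)*((D:ℝ)+1)) ≤ (k:ℝ)/((d:ℝ)*((d:ℝ)+1)) := by
      apply div_le_div_of_nonneg_left (by positivity) (by positivity)
      apply mul_le_mul hdD' (by linarith) (by positivity) (by positivity)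
    push_cast
    linarith

section Main

variable {V : Type*} [Fintype V] [DecidableEq V] (G : SimpleGraph V) [DecidableRel G.Adj]
  (l : List V)

def NB (j : ℕ) (v : V) : Finset V := Finset.univ.filter (fun u => G.Adj v u ∧ u ∉ l.take j)

def SV (j : ℕ) : Finset V := Finset.univ.filter (fun v => v ∉ l.take j)

noncomputable def phi (k j : ℕ) : ℝ := ∑ v ∈ SV l j, min 1 ((k:ℝ)/(((NB G l j v).card : ℝ)+1))

lemma NB_ncard (j : ℕ) (v : V) :
    {u : V | G.Adj v u ∧ u ∉ l.take j}.ncard = (NB G l j v).card := by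
  rw [show {u : V | G.Adj v u ∧ u ∉ l.take j} = ↑(NB G l j v) by ext u; simp [NB]]
  exact Set.ncard_coe_finset _

end Main


lemma phi_step {V : Type*} [Fintype V] [DecidableEq V] (G : SimpleGraph V) [DecidableRel G.Adj]
    (k : ℕ) (hk : 0 < k) (l : List V) (hnd : l.Nodup) (j : ℕ) (hj : j < l.length)
    (hdegj : k ≤ (NB G l j (l[j]'hj)).card)
    (hminj : ∀ x : V, x ∉ l.take j → k ≤ (NB G l j x).card →
      (NB G l j (l[j]'hj)).card ≤ (NB G l j x).card) :
    phi G l k (j+1) ≤ phi G l k j := by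
  set x := l[j]'hj with hx
  set d := (NB G l j x).card with hd
  have hxn : x ∉ l.take j := aux_not_mem_take hnd hj
  have hNB1 : ∀ v : V, NB G l (j+1) v = (NB G l j v).erase x := by
    intro v
    ext u
    simp only [NB, Finset.mem_filter, Finset.mem_univ, true_and, Finset.mem_erase,
      aux_take_succ_mem l hj]
    tauto
  have hSV1 : SV l (j+1) = (SV l j).erase x := by
    ext v
    simp only [SV, Finset.mem_filter, Finset.mem_univ, true_and, Finset.mem_erase,
      aux_take_succ_mem l hj]
    tauto
  have hxSV : x ∈ SV l j := by simp [SV, hxn]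
  have hxSV1 : x ∉ SV l (j+1) := by rw [hSV1]; simp
  have hins : SV l j = insert x (SV l (j+1)) := by rw [hSV1, Finset.insert_erase hxSV]
  have hA : NB G l j x ⊆ SV l (j+1) := by
    intro v hv
    simp only [NB, Finset.mem_filter, Finset.mem_univ, true_and] at hv
    rw [hSV1, Finset.mem_erase]
    exact ⟨fun he => G.irrefl (he ▸ hv.1), by simp [SV, hv.2]⟩
  have hvtake : ∀ v : V, v ∈ SV l (j+1) → v ∉ l.take j := by
    intro v hv
    simp only [SV, Finset.mem_filter, Finset.mem_univ, true_and,
      aux_take_succ_mem l hj] at hv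
    tauto
  have hxmem : ∀ v : V, v ∉ l.take j → (x ∈ NB G l j v ↔ v ∈ NB G l j x) := by
    intro v hv
    simp [NB, hxn, hv, G.adj_comm]
  have hdpos : (0:ℝ) < (d:ℝ) := by exact_mod_cast lt_of_lt_of_le hk hdegj
  have key : ∑ v ∈ SV l (j+1),
      (min 1 ((k:ℝ)/(((NB G l (j+1) v).card : ℝ)+1))
        - min 1 ((k:ℝ)/(((NB G l j v).card : ℝ)+1)))
      ≤ min 1 ((k:ℝ)/((d:ℝ)+1)) := by
    have hzero : ∀ v ∈ SV l (j+1), v ∉ NB G l j x →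
        (min 1 ((k:ℝ)/(((NB G l (j+1) v).card : ℝ)+1))
          - min 1 ((k:ℝ)/(((NB G l j v).card : ℝ)+1))) = 0 := by
      intro v hv hvn
      have hxv : x ∉ NB G l j v := fun h => hvn ((hxmem v (hvtake v hv)).1 h)
      rw [hNB1 v, Finset.erase_eq_of_notMem hxv, sub_self]
    rw [← Finset.sum_subset hA hzero]
    have hbound : ∀ v ∈ NB G l j x,
        (min 1 ((k:ℝ)/(((NB G l (j+1) v).card : ℝ)+1))
          - min 1 ((k:ℝ)/(((NB G l j v).card : ℝ)+1))) ≤ (k:ℝ)/((d:ℝ)*((d:ℝ)+1)) := by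
      intro v hv
      have hvt : v ∉ l.take j := by
        simp only [NB, Finset.mem_filter, Finset.mem_univ, true_and] at hv
        exact hv.2
      have hx_in : x ∈ NB G l j v := (hxmem v hvt).2 hv
      have hD1 : 1 ≤ (NB G l j v).card := Finset.card_pos.2 ⟨x, hx_in⟩
      have hcard : (NB G l (j+1) v).card = (NB G l j v).card - 1 := by
        rw [hNB1 v, Finset.card_erase_of_mem hx_in]
      rw [hcard]
      have := aux_arith k d ((NB G l j v).card) hk hdegj (fun h => hminj v hvt h) hD1
      push_cast at this ⊢
      convert this using 3
    calc ∑ v ∈ NB G l j x,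
          (min 1 ((k:ℝ)/(((NB G l (j+1) v).card : ℝ)+1))
            - min 1 ((k:ℝ)/(((NB G l j v).card : ℝ)+1)))
        ≤ (NB G l j x).card • ((k:ℝ)/((d:ℝ)*((d:ℝ)+1))) :=
          Finset.sum_le_card_nsmul _ _ _ hbound
      _ = (d:ℝ) * ((k:ℝ)/((d:ℝ)*((d:ℝ)+1))) := by rw [← hd, nsmul_eq_mul]
      _ = (k:ℝ)/((d:ℝ)+1) := by
          rw [eq_div_iff (by linarith : (0:ℝ) < (d:ℝ)+1).ne']
          field_simp
      _ = min 1 ((k:ℝ)/((d:ℝ)+1)) := by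
          rw [min_eq_right]
          rw [div_le_one (by linarith : (0:ℝ) < (d:ℝ)+1)]
          have : (k:ℝ) ≤ d := by exact_mod_cast hdegj
          linarith
  rw [phi, phi, hins, Finset.sum_insert hxSV1]
  rw [Finset.sum_sub_distrib] at key
  linarith

theorem stmt_4 {V : Type*} [Fintype V] [DecidableEq V] (G : SimpleGraph V)
    [DecidableRel G.Adj] (k : ℕ) (hk : 0 < k) (l : List V) (hnd : l.Nodup)
    (hdeg : ∀ (j : ℕ) (hj : j < l.length),
      k ≤ {u : V | G.Adj (l[j]'hj) u ∧ u ∉ l.take j}.ncard)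
    (hmin : ∀ (j : ℕ) (hj : j < l.length), ∀ x : V, x ∉ l.take j →
      k ≤ {u : V | G.Adj x u ∧ u ∉ l.take j}.ncard →
      {u : V | G.Adj (l[j]'hj) u ∧ u ∉ l.take j}.ncard ≤
        {u : V | G.Adj x u ∧ u ∉ l.take j}.ncard)
    (hterm : ∀ v : V, v ∉ l → {u : V | G.Adj v u ∧ u ∉ l}.ncard < k) :
    Contagious G k {v : V | v ∉ l} ∧
      (({v : V | v ∉ l}.ncard : ℝ)) ≤ ∑ v : V, min 1 ((k : ℝ) / (G.degree v + 1)) := by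
  set n := l.length with hn
  constructor
  · -- Contagiousness
    intro T hsub hcl
    have key : ∀ m : ℕ, ∀ v : V, v ∉ l.take (n - m) → v ∈ T := by
      intro m
      induction m with
      | zero =>
        intro v hv
        apply hsub
        simpa [hn] using hv
      | succ m ih =>
        intro v hv
        rcases le_or_gt n m with hle | hlt
        · exact ih v (by rwa [show n - m = n - (m+1) by omega])
        · set j := n - (m+1) with hj
          have hjn : j < n := by omega
          have hnm : n - m = j + 1 := by omega
          by_cases hv1 : v ∈ l.take (j+1)
          · have hveq : v = l[j] := by
              rcases (aux_take_succ_mem l hjn v).1 hv1 with h | h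
              · exact absurd h hv
              · exact h
            apply hcl
            have hsubs : {u : V | G.Adj v u ∧ u ∉ l.take j} ⊆ {u : V | G.Adj v u ∧ u ∈ T} := by
              intro u hu
              obtain ⟨hadj, hnt⟩ := hu
              refine ⟨hadj, ?_⟩
              apply ih
              rw [hnm, aux_take_succ_mem l hjn]
              push_neg
              refine ⟨hnt, ?_⟩
              intro he
              rw [he, hveq] at hadj
              exact G.irrefl hadj
            calc k ≤ {u : V | G.Adj (l[j]'hjn) u ∧ u ∉ l.take j}.ncard := hdeg j hjn
              _ = {u : V | G.Adj v u ∧ u ∉ l.take j}.ncard := by rw [hveq]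
              _ ≤ {u : V | G.Adj v u ∧ u ∈ T}.ncard :=
                  Set.ncard_le_ncard hsubs (Set.toFinite _)
          · exact ih v (by rwa [hnm])
    intro v
    exact key n v (by simp)
  · -- Cardinality bound
    set x := l with hxl
    have mono : ∀ j, j ≤ n → phi G l k j ≤ phi G l k 0 := by
      intro j
      induction j with
      | zero => intro _; exact le_refl _
      | succ j ih =>
        intro h
        have hjn : j < l.length := by omega
        have h1 : phi G l k (j+1) ≤ phi G l k j := by
          apply phi_step G k hk l hnd j hjn
          · rw [← NB_ncard]; exact hdeg j hjn
          · intro y hy hky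
            rw [← NB_ncard]
            rw [← NB_ncard] at hky ⊢
            exact hmin j hjn y hy hky
        exact h1.trans (ih (by omega))
    have h0 : phi G l k 0 = ∑ v : V, min 1 ((k : ℝ) / (G.degree v + 1)) := by
      rw [phi]
      rw [show SV l 0 = Finset.univ by simp [SV]]
      apply Finset.sum_congr rfl
      intro v _
      have hNB0 : NB G l 0 v = G.neighborFinset v := by
        ext u
        simp [NB, SimpleGraph.mem_neighborFinset]
      rw [hNB0]
      rfl
    have hfin : phi G l k n = ((SV l n).card : ℝ) := by
      rw [phi]
      rw [Finset.sum_congr rfl (fun v hv => ?_), Finset.sum_const, nsmul_eq_mul, mul_one]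
      have hvl : v ∉ l := by
        simp only [SV, Finset.mem_filter, Finset.mem_univ, true_and, hn, hxl,
          List.take_length] at hv
        exact hv
      have hlt : (NB G l n v).card < k := by
        rw [← NB_ncard]
        have := hterm v hvl
        rw [show l.take n = l from by rw [hn]; exact List.take_length] 
        exact this
      rw [min_eq_left]
      rw [le_div_iff₀ (by positivity)]
      have : ((NB G l n v).card : ℝ) + 1 ≤ (k:ℝ) := by exact_mod_cast hlt
      linarith
    have hcount : {v : V | v ∉ l}.ncard = (SV l n).card := by
      rw [show {v : V | v ∉ l} = ↑(SV l n) from ?_, Set.ncard_coe_finset]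
      ext v
      simp [SV, hn, hxl, List.take_length]
    calc (({v : V | v ∉ l}.ncard : ℕ) : ℝ) = phi G l k n := by rw [hcount, hfin]
      _ ≤ phi G l k 0 := mono n le_rfl
      _ = ∑ v : V, min 1 ((k : ℝ) / (G.degree v + 1)) := h0
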